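/- Base case of q-commuting minors: let X be an n×n q-generic matrix, I ⊆ {1,…,n}, and j ∈ {1,…,n}\I such that {j} surrounds I (i.e., either j < min I or j > max I). Then the single entry x_{j,1} and the quantum minor det_q X_{I,[|I|]} satisfy x_{j,1} · [I] = q^{ε} · [I] · x_{j,1}, where [I] = det_q X_{I,[|I|]} and ε = 1 if j > max I and ε = −1 if j < min I. -/

import Mathlib

/-- An `m × m` matrix `X` over a ring is `q`-generic. -/
def IsQGeneric {R : Type*} [Ring R] (q : Rˣ) {m : ℕ} (X : Fin m → Fin m → R) : Prop :=
  (∀ i k l, k < l → X i l * X i k = ↑q * (X i k * X i l)) ∧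
  (∀ i j k, i < j → X j k * X i k = ↑q * (X i k * X j k)) ∧
  (∀ i j k l, i < j → k < l → X j k * X i l = X i l * X j k) ∧
  (∀ i j k l, i < j → k < l →
    X j l * X i k = X i k * X j l + ((q : R) - ↑q⁻¹) * (X i l * X j k))

/-- Number of inversions of a permutation of `Fin d`. -/
def inversions {d : ℕ} (σ : Equiv.Perm (Fin d)) : ℕ :=
  (Finset.univ.filter (fun p : Fin d × Fin d => p.1 < p.2 ∧ σ p.2 < σ p.1)).card

/-- The quantum determinant
`det_q A = Σ_σ (−q)^{−ℓ(σ)} a_{σ(1),1} ⋯ a_{σ(d),d}` (noncommutative ordered product). -/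
noncomputable def detq {R : Type*} [Ring R] (q : Rˣ) {d : ℕ}
    (A : Fin d → Fin d → R) : R :=
  ∑ σ : Equiv.Perm (Fin d),
    (((-q)⁻¹ : Rˣ) : R) ^ (inversions σ) * (List.ofFn (fun i => A (σ i) i)).prod


section Aux
variable {R : Type*} [Ring R] (q : Rˣ)

lemma central_qinv (hq : ∀ x : R, ↑q * x = x * ↑q) : ∀ x : R, (↑q⁻¹ : R) * x = x * ↑q⁻¹ := by
  intro x
  have h1 : (↑q⁻¹ : R) * ↑q = 1 := by
    rw [← Units.val_mul, inv_mul_cancel, Units.val_one]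
  have h2 : (↑q : R) * ↑q⁻¹ = 1 := by
    rw [← Units.val_mul, mul_inv_cancel, Units.val_one]
  calc (↑q⁻¹ : R) * x = ↑q⁻¹ * (x * (↑q⁻¹ * ↑q)) := by rw [h1, mul_one]
    _ = ↑q⁻¹ * ((x * ↑q⁻¹) * ↑q) := by rw [mul_assoc]
    _ = ↑q⁻¹ * (↑q * (x * ↑q⁻¹)) := by rw [hq (x * ↑q⁻¹)]
    _ = (↑q⁻¹ * ↑q) * (x * ↑q⁻¹) := by rw [mul_assoc]
    _ = x * ↑q⁻¹ := by rw [h1, one_mul]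

/-- κ = ((-q)⁻¹ : Rˣ) as an element of R equals -↑q⁻¹ -/
lemma kappa_eq : ((((-q)⁻¹ : Rˣ)) : R) = -(↑q⁻¹ : R) := by
  have : ((-q)⁻¹ : Rˣ) = -(q⁻¹) := by
    rw [inv_neg]
  rw [this, Units.val_neg]

lemma central_pow {c : R} (hc : ∀ x : R, c * x = x * c) (k : ℕ) :
    ∀ x : R, c ^ k * x = x * c ^ k := by
  intro x
  induction k with
  | zero => simp
  | succ m ih => rw [pow_succ, mul_assoc, hc x, ← mul_assoc, ih, mul_assoc]

lemma central_kappa (hq : ∀ x : R, ↑q * x = x * ↑q) (k : ℕ) :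
    ∀ x : R, ((((-q)⁻¹ : Rˣ)) : R) ^ k * x = x * ((((-q)⁻¹ : Rˣ)) : R) ^ k := by
  apply central_pow
  intro x
  rw [kappa_eq q, neg_mul, central_qinv q hq x, mul_neg]


lemma swap_lt_of_lt {d : ℕ} {u v : Fin d} (huv : (v:ℕ) = (u:ℕ) + 1)
    {a b : Fin d} (hab : a < b) (hne : ¬(a = u ∧ b = v)) :
    Equiv.swap u v a < Equiv.swap u v b := by
  have hd : ∀ x : Fin d, Equiv.swap u v x = if x = u then v else if x = v then u else x :=
    fun x => Equiv.swap_apply_def u v x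
  rw [hd a, hd b]
  simp only [Fin.lt_def, Fin.ext_iff, not_and] at *
  split_ifs <;> omega

lemma inversions_mul_adj_swap {d : ℕ} (σ : Equiv.Perm (Fin d)) (u v : Fin d)
    (huv : (v:ℕ) = (u:ℕ) + 1) (h : σ u < σ v) :
    inversions (σ * Equiv.swap u v) = inversions σ + 1 := by
  classical
  set s := Equiv.swap u v with hs
  have huvlt : u < v := by rw [Fin.lt_def]; omega
  have huvne : u ≠ v := ne_of_lt huvlt
  set Sσ := Finset.univ.filter (fun p : Fin d × Fin d => p.1 < p.2 ∧ σ p.2 < σ p.1) with hSσ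
  set Sτ := Finset.univ.filter
      (fun p : Fin d × Fin d => p.1 < p.2 ∧ (σ * s) p.2 < (σ * s) p.1) with hSτ
  have happ : ∀ x, (σ * s) x = σ (s x) := fun x => rfl
  have hss : ∀ x, s (s x) = x := fun x => Equiv.swap_apply_self u v x
  have key : Sτ = insert (u, v) (Sσ.image (fun p => (s p.1, s p.2))) := by
    ext p
    simp only [hSτ, hSσ, Finset.mem_filter, Finset.mem_univ, true_and, Finset.mem_insert,
      Finset.mem_image]
    constructor
    · rintro ⟨h1, h2⟩
      by_cases hp : p = (u, v)
      · exact Or.inl hp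
      · refine Or.inr ⟨(s p.1, s p.2), ⟨?_, ?_⟩, ?_⟩
        · apply swap_lt_of_lt huv h1
          rintro ⟨ha, hb⟩
          exact hp (Prod.ext ha hb)
        · rw [happ, happ] at h2; exact h2
        · simp [hss]
    · rintro (hp | ⟨w, ⟨hw1, hw2⟩, hw3⟩)
      · subst hp
        refine ⟨huvlt, ?_⟩
        rw [happ, happ, Equiv.swap_apply_left, Equiv.swap_apply_right]
        exact h
      · subst hw3
        constructor
        · apply swap_lt_of_lt huv hw1
          rintro ⟨ha, hb⟩
          rw [ha, hb] at hw2
          exact absurd hw2 (not_lt.mpr (le_of_lt h))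
        · rw [happ, happ, hss, hss]
          exact hw2
  have hnotmem : (u, v) ∉ Sσ.image (fun p => (s p.1, s p.2)) := by
    simp only [Finset.mem_image, not_exists, not_and]
    rintro w hw hw2
    have e1 : s w.1 = u := congrArg Prod.fst hw2
    have e2 : s w.2 = v := congrArg Prod.snd hw2
    have h1 : w.1 = s u := by rw [← e1, hss]
    have h2 : w.2 = s v := by rw [← e2, hss]
    rw [Equiv.swap_apply_left] at h1
    rw [Equiv.swap_apply_right] at h2
    simp only [hSσ, Finset.mem_filter] at hw
    have := hw.2.1
    rw [h1, h2] at this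
    exact absurd this (not_lt.mpr (le_of_lt huvlt))
  have hinj : Set.InjOn (fun p : Fin d × Fin d => (s p.1, s p.2)) Sσ := by
    intro p _ p' _ hpp
    simp only [Prod.mk.injEq] at hpp
    have e1 := congrArg s hpp.1
    have e2 := congrArg s hpp.2
    rw [hss, hss] at e1
    rw [hss, hss] at e2
    exact Prod.ext e1 e2
  have e1 : inversions (σ * s) = Sτ.card := rfl
  have e2 : inversions σ = Sσ.card := rfl
  rw [e1, e2, key, Finset.card_insert_of_notMem hnotmem, Finset.card_image_of_injOn hinj]

lemma sum_pair {d : ℕ} (u v : Fin d) (hne : u ≠ v) (F : Equiv.Perm (Fin d) → R) :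
    ∑ σ : Equiv.Perm (Fin d), F σ =
      ∑ σ ∈ Finset.univ.filter (fun σ : Equiv.Perm (Fin d) => σ u < σ v),
        (F σ + F (σ * Equiv.swap u v)) := by
  classical
  rw [Finset.sum_add_distrib]
  rw [← Finset.sum_filter_add_sum_filter_not Finset.univ
    (fun σ : Equiv.Perm (Fin d) => σ u < σ v) F]
  congr 1
  refine Finset.sum_bij' (fun σ _ => σ * Equiv.swap u v) (fun σ _ => σ * Equiv.swap u v)
    ?_ ?_ ?_ ?_ ?_
  · intro σ hσ
    have hσ' := (Finset.mem_filter.mp hσ).2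
    simp only [Finset.mem_filter, Finset.mem_univ, true_and]
    rw [show (σ * Equiv.swap u v) u = σ v from by simp [Equiv.Perm.mul_apply],
      show (σ * Equiv.swap u v) v = σ u from by simp [Equiv.Perm.mul_apply]]
    rcases lt_or_eq_of_le (not_lt.mp hσ') with h | h
    · exact h
    · exact absurd (σ.injective h) hne.symm
  · intro σ hσ
    have hσ' := (Finset.mem_filter.mp hσ).2
    simp only [Finset.mem_filter, Finset.mem_univ, true_and]
    rw [show (σ * Equiv.swap u v) u = σ v from by simp [Equiv.Perm.mul_apply],
      show (σ * Equiv.swap u v) v = σ u from by simp [Equiv.Perm.mul_apply]]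
    exact not_lt.mpr (le_of_lt hσ')
  · intro σ _
    simp only [mul_assoc, Equiv.swap_mul_self, mul_one]
  · intro σ _
    simp only [mul_assoc, Equiv.swap_mul_self, mul_one]
  · intro σ _
    simp only [mul_assoc, Equiv.swap_mul_self, mul_one]

section Frag
variable {R : Type*} [Ring R]

lemma list_sum_map_mul_right {α : Type*} (l : List α) (f : α → R) (a : R) :
    (l.map fun b => f b * a).sum = (l.map f).sum * a := by
  induction l with
  | nil => simp
  | cons x xs ih => simp [ih, add_mul]

lemma list_sum_map_mul_left {α : Type*} (l : List α) (f : α → R) (a : R) :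
    (l.map fun b => a * f b).sum = a * (l.map f).sum := by
  induction l with
  | nil => simp
  | cons x xs ih => simp [ih, mul_add]

lemma prod_combo : ∀ (p : ℕ) {d : ℕ} (_ : p + 1 < d) (u v : Fin d)
    (hu : (u:ℕ) = p) (hv : (v:ℕ) = p+1) (G : Fin d → R)
    (l : List (R × (Fin d → R)))
    (_ : ∀ P ∈ l, ∀ z : R, P.1 * z = z * P.1)
    (_ : ∀ P ∈ l, ∀ i : Fin d, (i:ℕ) ≠ p → (i:ℕ) ≠ p+1 → P.2 i = G i)
    (_ : (l.map fun P => P.1 * (P.2 u * P.2 v)).sum = 0),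
    (l.map fun P => P.1 * (List.ofFn P.2).prod).sum = 0 := by
  intro p
  induction p with
  | zero =>
      intro d hp u v hu hv G l hc hagree hmid
      obtain ⟨e, rfl⟩ : ∃ e, d = e + 2 := ⟨d - 2, by omega⟩
      have hu0 : u = 0 := by apply Fin.ext; simpa using hu
      have hv1 : v = (0 : Fin (e+1)).succ := by apply Fin.ext; simpa using hv
      have hrw : ∀ P ∈ l, P.1 * (List.ofFn P.2).prod =
          (P.1 * (P.2 u * P.2 v)) * (List.ofFn (fun i : Fin e => G i.succ.succ)).prod := by
        intro P hP
        rw [List.ofFn_succ, List.prod_cons, List.ofFn_succ, List.prod_cons]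
        have ht : (List.ofFn fun i : Fin e => P.2 i.succ.succ) =
            (List.ofFn fun i : Fin e => G i.succ.succ) := by
          congr 1; funext i
          exact hagree P hP _ (by simp) (by simp)
        rw [ht, hu0, hv1, mul_assoc, mul_assoc]
      rw [List.map_congr_left hrw, list_sum_map_mul_right, hmid, zero_mul]
  | succ p ih =>
      intro d hp u v hu hv G l hc hagree hmid
      obtain ⟨e, rfl⟩ : ∃ e, d = e + 1 := ⟨d - 1, by omega⟩
      have hp' : p + 1 < e := by omega
      have hune : (0 : Fin (e+1)) ≠ u := by
        intro h; rw [← h] at hu; simp at hu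
      have hrw : ∀ P ∈ l, P.1 * (List.ofFn P.2).prod =
          G 0 * (P.1 * (List.ofFn fun i : Fin e => P.2 i.succ).prod) := by
        intro P hP
        rw [List.ofFn_succ, List.prod_cons,
          hagree P hP 0 (by simp) (by simp),
          ← mul_assoc, hc P hP (G 0), mul_assoc]
      rw [List.map_congr_left hrw, list_sum_map_mul_left]
      have hmain : (l.map fun P => P.1 * (List.ofFn fun i : Fin e => P.2 i.succ).prod).sum
          = 0 := by
        have hupos : 0 < (u:ℕ) := by omega
        have hvpos : 0 < (v:ℕ) := by omega
        set u' : Fin e := ⟨(u:ℕ) - 1, by omega⟩ with hu'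
        set v' : Fin e := ⟨(v:ℕ) - 1, by omega⟩ with hv'
        have husucc : u'.succ = u := by apply Fin.ext; simp [hu']; omega
        have hvsucc : v'.succ = v := by apply Fin.ext; simp [hv']; omega
        have := ih hp' u' v' (by simp [hu']; omega) (by simp [hv']; omega)
          (fun i : Fin e => G i.succ)
          (l.map fun P => (P.1, fun i : Fin e => P.2 i.succ))
          (by
            intro P hP z
            obtain ⟨Q, hQ, rfl⟩ := List.mem_map.mp hP
            exact hc Q hQ z)
          (by
            intro P hP i hi1 hi2
            obtain ⟨Q, hQ, rfl⟩ := List.mem_map.mp hP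
            exact hagree Q hQ i.succ (by simp; omega) (by simp; omega))
          (by
            rw [List.map_map]
            have : ((fun P : R × (Fin e → R) => P.1 * (P.2 u' * P.2 v')) ∘
                (fun P : R × (Fin (e+1) → R) => (P.1, fun i : Fin e => P.2 i.succ)))
                = fun P : R × (Fin (e+1) → R) => P.1 * (P.2 u * P.2 v) := by
              funext P
              simp only [Function.comp]
              rw [husucc, hvsucc]
            rw [this, hmid])
        rw [List.map_map] at this
        convert this using 2
        rfl
      rw [hmain, mul_zero]

end Frag


variable (R) in
noncomputable def Dsum (q : Rˣ) {d : ℕ} (a : Fin d → Fin d → R) (c : Fin d → Fin d) : R :=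
  ∑ σ : Equiv.Perm (Fin d),
    (((-q)⁻¹ : Rˣ) : R) ^ (inversions σ) * (List.ofFn fun i => a (σ i) (c i)).prod

lemma qinv_mul_q : (↑q⁻¹ : R) * ↑q = 1 := by
  rw [← Units.val_mul, inv_mul_cancel, Units.val_one]

lemma midZ (hq : ∀ x : R, ↑q * x = x * ↑q) (I : ℕ) (AB : R) :
    (((-q)⁻¹ : Rˣ) : R) ^ I * AB + (((-q)⁻¹ : Rˣ) : R) ^ (I+1) * ((↑q : R) * AB) = 0 := by
  set s : R := (↑q⁻¹ : R) with hs
  rw [pow_succ, kappa_eq q, mul_assoc]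
  rw [show (-s) * ((↑q:R) * AB) = -AB by rw [neg_mul, ← mul_assoc, qinv_mul_q, one_mul]]
  rw [mul_neg, add_neg_cancel]

lemma midS (hq : ∀ x : R, ↑q * x = x * ↑q) (I : ℕ) (AB A'B' : R) :
    (((-q)⁻¹ : Rˣ) : R) ^ I * AB
      + (((-q)⁻¹ : Rˣ) : R) ^ (I+1) * (A'B' + ((↑q : R) - ↑q⁻¹) * AB)
      + ((↑q⁻¹ : R) * ((((-q)⁻¹ : Rˣ) : R) ^ I * A'B')
      + (↑q⁻¹ : R) * ((((-q)⁻¹ : Rˣ) : R) ^ (I+1) * AB)) = 0 := by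
  set s : R := (↑q⁻¹ : R) with hs
  set K : R := (((-q)⁻¹ : Rˣ) : R) ^ I with hK
  have hcen : ∀ x : R, K * x = x * K := central_kappa q hq I
  have hP : (((-q)⁻¹ : Rˣ) : R) ^ (I+1) = K * (-s) := by
    rw [pow_succ, hK, kappa_eq q]
  rw [hP]
  have hterm2 : K * (-s) * (A'B' + ((↑q : R) - s) * AB)
      = K * ((-s) * A'B') + K * (((-s) * ((↑q:R) - s)) * AB) := by
    rw [mul_assoc K (-s) (A'B' + ((↑q : R) - s) * AB), mul_add (-s) A'B',
      ← mul_assoc (-s) ((↑q:R) - s) AB, mul_add K]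
  have hterm3 : s * (K * A'B') = K * (s * A'B') := by
    rw [← mul_assoc, ← hcen s, mul_assoc]
  have hterm4 : s * (K * (-s) * AB) = K * ((s * (-s)) * AB) := by
    rw [← mul_assoc, ← mul_assoc, ← hcen s, mul_assoc K s, mul_assoc K]
  rw [hterm2, hterm3, hterm4]
  have hAB : K * AB = K * ((1:R) * AB) := by rw [one_mul]
  rw [hAB]
  rw [show K * ((1:R) * AB) + (K * ((-s) * A'B') + K * (((-s) * ((↑q:R) - s)) * AB))
      + (K * (s * A'B') + K * ((s * (-s)) * AB))
      = K * (((1:R) + (-s) * ((↑q:R) - s) + s * (-s)) * AB + ((-s) + s) * A'B') by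
    rw [add_mul, add_mul, add_mul, mul_add, mul_add, mul_add, mul_add]; abel]
  have hc1 : (1:R) + (-s) * ((↑q:R) - s) + s * (-s) = 0 := by
    rw [neg_mul, mul_sub, qinv_mul_q, mul_neg, neg_sub]
    abel
  have hc2 : (-s) + s = (0:R) := by abel
  rw [hc1, hc2, zero_mul, zero_mul, add_zero, mul_zero]

lemma Dsum_adj_eq_zero (hq : ∀ x : R, ↑q * x = x * ↑q) {d : ℕ} (a : Fin d → Fin d → R)
    (hA : IsQGeneric q a) (c : Fin d → Fin d) (u v : Fin d)
    (huv : (v:ℕ) = (u:ℕ) + 1) (hcuv : c u = c v) : Dsum R q a c = 0 := by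
  classical
  have hvd : (u:ℕ) + 1 < d := huv ▸ v.isLt
  have hne : u ≠ v := by intro h; rw [h] at huv; omega
  rw [Dsum, sum_pair u v hne]
  apply Finset.sum_eq_zero
  intro σ hσ
  have hlt : σ u < σ v := (Finset.mem_filter.mp hσ).2
  rw [inversions_mul_adj_swap σ u v huv hlt]
  set I := inversions σ with hI
  set κ : R := (((-q)⁻¹ : Rˣ) : R) with hκ
  have hcombo := prod_combo (u:ℕ) hvd u v rfl huv
    (fun i => a (σ i) (c i))
    [(κ ^ I, fun i => a (σ i) (c i)),
     (κ ^ (I+1), fun i => a ((σ * Equiv.swap u v) i) (c i))]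
    (by
      rintro P hP z
      simp only [List.mem_cons, List.not_mem_nil, or_false] at hP
      rcases hP with rfl | rfl
      · exact central_kappa q hq I z
      · exact central_kappa q hq (I+1) z)
    (by
      rintro P hP i hi1 hi2
      simp only [List.mem_cons, List.not_mem_nil, or_false] at hP
      have hsi : (Equiv.swap u v) i = i :=
        Equiv.swap_apply_of_ne_of_ne
          (by intro h; rw [h] at hi1; exact hi1 rfl)
          (by intro h; rw [h] at hi2; rw [huv] at hi2; exact hi2 rfl)
      rcases hP with rfl | rfl
      · rfl
      · show a ((σ * Equiv.swap u v) i) (c i) = a (σ i) (c i)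
        rw [Equiv.Perm.mul_apply, hsi])
    (by
      simp only [List.map_cons, List.map_nil, List.sum_cons, List.sum_nil, add_zero]
      have e1 : (σ * Equiv.swap u v) u = σ v := by
        rw [Equiv.Perm.mul_apply, Equiv.swap_apply_left]
      have e2 : (σ * Equiv.swap u v) v = σ u := by
        rw [Equiv.Perm.mul_apply, Equiv.swap_apply_right]
      rw [e1, e2, ← hcuv]
      have hrel : a (σ v) (c u) * a (σ u) (c u) = ↑q * (a (σ u) (c u) * a (σ v) (c u)) :=
        hA.2.1 (σ u) (σ v) (c u) hlt
      rw [hrel]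
      exact midZ q hq I _)
  simpa using hcombo

lemma Dsum_descent (hq : ∀ x : R, ↑q * x = x * ↑q) {d : ℕ} (a : Fin d → Fin d → R)
    (hA : IsQGeneric q a) (c : Fin d → Fin d) (u v : Fin d)
    (huv : (v:ℕ) = (u:ℕ) + 1) (hcuv : c v < c u) :
    Dsum R q a c = (-(↑q⁻¹ : R)) * Dsum R q a (c ∘ Equiv.swap u v) := by
  classical
  have hvd : (u:ℕ) + 1 < d := huv ▸ v.isLt
  have hne : u ≠ v := by intro h; rw [h] at huv; omega
  have key : Dsum R q a c + (↑q⁻¹ : R) * Dsum R q a (c ∘ Equiv.swap u v) = 0 := by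
    rw [Dsum, Dsum, sum_pair u v hne, sum_pair u v hne
      (fun σ => (((-q)⁻¹ : Rˣ) : R) ^ (inversions σ)
        * (List.ofFn fun i => a (σ i) ((c ∘ Equiv.swap u v) i)).prod),
      Finset.mul_sum, ← Finset.sum_add_distrib]
    apply Finset.sum_eq_zero
    intro σ hσ
    have hlt : σ u < σ v := (Finset.mem_filter.mp hσ).2
    rw [inversions_mul_adj_swap σ u v huv hlt]
    set I := inversions σ with hI
    set κ : R := (((-q)⁻¹ : Rˣ) : R) with hκ
    have hcombo := prod_combo (u:ℕ) hvd u v rfl huv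
      (fun i => a (σ i) (c i))
      [(κ ^ I, fun i => a (σ i) (c i)),
       (κ ^ (I+1), fun i => a ((σ * Equiv.swap u v) i) (c i)),
       ((↑q⁻¹ : R) * κ ^ I, fun i => a (σ i) ((c ∘ Equiv.swap u v) i)),
       ((↑q⁻¹ : R) * κ ^ (I+1),
         fun i => a ((σ * Equiv.swap u v) i) ((c ∘ Equiv.swap u v) i))]
      (by
        rintro P hP z
        simp only [List.mem_cons, List.not_mem_nil, or_false] at hP
        have hqi := central_qinv q hq
        rcases hP with rfl | rfl | rfl | rfl
        · exact central_kappa q hq I z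
        · exact central_kappa q hq (I+1) z
        · show (↑q⁻¹ : R) * κ ^ I * z = z * ((↑q⁻¹ : R) * κ ^ I)
          rw [mul_assoc, central_kappa q hq I z, ← mul_assoc, hqi z, mul_assoc]
        · show (↑q⁻¹ : R) * κ ^ (I+1) * z = z * ((↑q⁻¹ : R) * κ ^ (I+1))
          rw [mul_assoc, central_kappa q hq (I+1) z, ← mul_assoc, hqi z, mul_assoc])
      (by
        rintro P hP i hi1 hi2
        simp only [List.mem_cons, List.not_mem_nil, or_false] at hP
        have hsi : (Equiv.swap u v) i = i :=
          Equiv.swap_apply_of_ne_of_ne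
            (by intro h; rw [h] at hi1; exact hi1 rfl)
            (by intro h; rw [h] at hi2; rw [huv] at hi2; exact hi2 rfl)
        rcases hP with rfl | rfl | rfl | rfl
        · rfl
        · show a ((σ * Equiv.swap u v) i) (c i) = a (σ i) (c i)
          rw [Equiv.Perm.mul_apply, hsi]
        · show a (σ i) ((c ∘ Equiv.swap u v) i) = a (σ i) (c i)
          rw [Function.comp_apply, hsi]
        · show a ((σ * Equiv.swap u v) i) ((c ∘ Equiv.swap u v) i) = a (σ i) (c i)
          rw [Function.comp_apply, Equiv.Perm.mul_apply, hsi])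
      (by
        simp only [List.map_cons, List.map_nil, List.sum_cons, List.sum_nil, add_zero,
          Function.comp_apply]
        have e1 : (σ * Equiv.swap u v) u = σ v := by
          rw [Equiv.Perm.mul_apply, Equiv.swap_apply_left]
        have e2 : (σ * Equiv.swap u v) v = σ u := by
          rw [Equiv.Perm.mul_apply, Equiv.swap_apply_right]
        have f1 : (Equiv.swap u v) u = v := Equiv.swap_apply_left u v
        have f2 : (Equiv.swap u v) v = u := Equiv.swap_apply_right u v
        rw [e1, e2, f1, f2]
        have h3 : a (σ v) (c v) * a (σ u) (c u) = a (σ u) (c u) * a (σ v) (c v) :=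
          hA.2.2.1 (σ u) (σ v) (c v) (c u) hlt hcuv
        have h4 : a (σ v) (c u) * a (σ u) (c v)
            = a (σ u) (c v) * a (σ v) (c u) + ((↑q : R) - ↑q⁻¹)
              * (a (σ u) (c u) * a (σ v) (c v)) :=
          hA.2.2.2 (σ u) (σ v) (c v) (c u) hlt hcuv
        rw [h3, h4]
        rw [mul_assoc (↑q⁻¹ : R) (κ ^ I), mul_assoc (↑q⁻¹ : R) (κ ^ (I+1)),
          ← add_assoc]
        exact midS q hq I _ _)
    rw [mul_add, ← mul_assoc, ← mul_assoc]
    simpa only [List.map_cons, List.map_nil, List.sum_cons, List.sum_nil, add_zero,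
      add_assoc] using hcombo
  have h2 := eq_neg_of_add_eq_zero_left key
  rw [h2, neg_mul]


/-- Column pattern: identity except the value 0 sits at position `p`, and the positions
in `(p, t+1]` are shifted down by one. -/
def bubbleCol {d : ℕ} (hd : 0 < d) (t p : ℕ) : Fin d → Fin d := fun i =>
  if (i:ℕ) < p then i
  else if (i:ℕ) = p then ⟨0, hd⟩
  else if (i:ℕ) ≤ t+1 then ⟨(i:ℕ)-1, Nat.lt_of_le_of_lt (Nat.sub_le _ _) i.isLt⟩
  else i

lemma Dsum_dup_zero (hq : ∀ x : R, ↑q * x = x * ↑q) {d : ℕ} (hd : 0 < d)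
    (a : Fin d → Fin d → R) (hA : IsQGeneric q a) (t : ℕ) (ht : t + 1 < d) :
    Dsum R q a (fun i => if (i:ℕ) = t + 1 then ⟨0, hd⟩ else i) = 0 := by
  have hg : ∀ p : ℕ, 1 ≤ p → p ≤ t + 1 → Dsum R q a (bubbleCol hd t p) = 0 := by
    intro p
    induction p with
    | zero => intro h; omega
    | succ p ih =>
        intro _ hple
        by_cases hp0 : p = 0
        · subst hp0
          apply Dsum_adj_eq_zero q hq a hA _ ⟨0, hd⟩ ⟨1, by omega⟩ (by simp)
          show bubbleCol hd t 1 ⟨0, hd⟩ = bubbleCol hd t 1 ⟨1, by omega⟩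
          simp [bubbleCol]
        · have hp1 : 1 ≤ p := by omega
          have hdesc : bubbleCol hd t (p+1) (⟨p+1, by omega⟩ : Fin d)
              < bubbleCol hd t (p+1) (⟨p, by omega⟩ : Fin d) := by
            simp only [bubbleCol]
            rw [if_neg (by simp), if_pos (by simp), if_pos (by simp)]
            simp only [Fin.lt_def]
            omega
          have hstep := Dsum_descent q hq a hA (bubbleCol hd t (p+1))
            ⟨p, by omega⟩ ⟨p+1, by omega⟩ (by simp) hdesc
          have hcomp : (bubbleCol hd t (p+1) : Fin d → Fin d)
              ∘ (Equiv.swap (⟨p, by omega⟩ : Fin d) ⟨p+1, by omega⟩) = bubbleCol hd t p := by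
            funext i
            simp only [Function.comp_apply]
            rcases eq_or_ne i (⟨p, by omega⟩ : Fin d) with hi | hi
            · rw [hi, Equiv.swap_apply_left]
              show bubbleCol hd t (p+1) ⟨p+1, _⟩ = bubbleCol hd t p ⟨p, _⟩
              simp only [bubbleCol]
              rw [if_neg (by simp), if_pos (by simp), if_neg (by simp), if_pos (by simp)]
            · rcases eq_or_ne i (⟨p+1, by omega⟩ : Fin d) with hi2 | hi2
              · rw [hi2, Equiv.swap_apply_right]
                show bubbleCol hd t (p+1) ⟨p, _⟩ = bubbleCol hd t p ⟨p+1, _⟩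
                simp only [bubbleCol]
                rw [if_pos (by simp), if_neg (by simp), if_neg (by simp),
                  if_pos (by simp; omega)]
                apply Fin.ext
                simp
              · rw [Equiv.swap_apply_of_ne_of_ne hi hi2]
                have hv1 : (i:ℕ) ≠ p := fun h => hi (Fin.ext (by simp [h]))
                have hv2 : (i:ℕ) ≠ p+1 := fun h => hi2 (Fin.ext (by simp [h]))
                simp only [bubbleCol]
                split_ifs <;> (apply Fin.ext; simp <;> omega)
          rw [hstep, hcomp, ih hp1 (by omega), mul_zero]
  have hfinal := hg (t+1) (by omega) le_rfl
  have hcols : (bubbleCol hd t (t+1) : Fin d → Fin d)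
      = fun i : Fin d => if (i:ℕ) = t + 1 then (⟨0, hd⟩ : Fin d) else i := by
    funext i
    simp only [bubbleCol]
    split_ifs <;> (apply Fin.ext; simp <;> omega)
  rw [← hcols]
  exact hfinal

lemma push (x cc : R) (hcc : ∀ z : R, cc * z = z * cc) :
    ∀ {e : ℕ} (f yy zz : Fin e → R),
      (∀ t, x * f t = f t * x - cc * (yy t * zz t)) →
      (∀ s t : Fin e, s < t → f s * yy t = yy t * f s) →
      x * (List.ofFn f).prod = (List.ofFn f).prod * x
        - cc * ∑ t : Fin e, yy t * (List.ofFn (Function.update f t (zz t))).prod := by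
  intro e
  induction e with
  | zero =>
      intro f yy zz _ _
      simp
  | succ e ih =>
      intro f yy zz hx hcomm
      rw [List.ofFn_succ, List.prod_cons]
      set P := (List.ofFn fun i : Fin e => f i.succ).prod with hPdef
      have hxP : x * P = P * x - cc * ∑ t : Fin e, yy t.succ *
          (List.ofFn (Function.update (fun i : Fin e => f i.succ) t (zz t.succ))).prod :=
        ih (fun i => f i.succ) (fun i => yy i.succ) (fun i => zz i.succ)
          (fun t => hx t.succ)
          (fun s t hst => hcomm s.succ t.succ (by rwa [Fin.succ_lt_succ_iff]))
      have tail_eq : ∀ t : Fin e,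
          (List.ofFn (Function.update (fun i : Fin e => f i.succ) t (zz t.succ)))
            = List.ofFn (fun i : Fin e => Function.update f t.succ (zz t.succ) i.succ) := by
        intro t
        congr 1
        funext i
        have h := congrFun
          (Function.update_comp_eq_of_injective f (Fin.succ_injective e) t (zz t.succ)) i
        simpa [Function.comp_def] using h.symm
      have head_eq : ∀ t : Fin e,
          f 0 * (List.ofFn (fun i : Fin e => Function.update f t.succ (zz t.succ) i.succ)).prod
            = (List.ofFn (Function.update f t.succ (zz t.succ))).prod := by
        intro t
        rw [List.ofFn_succ (f := Function.update f t.succ (zz t.succ)), List.prod_cons,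
          Function.update_of_ne (Fin.succ_ne_zero t).symm]
      have zero_eq : zz 0 * P = (List.ofFn (Function.update f 0 (zz 0))).prod := by
        have htl : (List.ofFn fun i : Fin e => Function.update f 0 (zz 0) i.succ)
            = List.ofFn fun i : Fin e => f i.succ := by
          congr 1
        rw [List.ofFn_succ (f := Function.update f 0 (zz 0)), List.prod_cons,
          Function.update_self, htl]
      calc x * (f 0 * P) = (x * f 0) * P := by rw [mul_assoc]
        _ = (f 0 * x - cc * (yy 0 * zz 0)) * P := by rw [hx 0]
        _ = f 0 * (x * P) - cc * (yy 0 * (zz 0 * P)) := by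
            rw [sub_mul, mul_assoc, mul_assoc, mul_assoc]
        _ = f 0 * (P * x) - cc * (f 0 * ∑ t : Fin e, yy t.succ *
              (List.ofFn (Function.update (fun i : Fin e => f i.succ) t (zz t.succ))).prod)
            - cc * (yy 0 * (zz 0 * P)) := by
            rw [hxP, mul_sub, ← mul_assoc (f 0) cc, ← hcc (f 0), mul_assoc]
        _ = f 0 * (P * x) - cc * (∑ t : Fin e, yy t.succ *
              (List.ofFn (Function.update f t.succ (zz t.succ))).prod)
            - cc * (yy 0 * (List.ofFn (Function.update f 0 (zz 0))).prod) := by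
            have hsums : (∑ t : Fin e, f 0 * (yy t.succ *
                (List.ofFn (Function.update (fun i : Fin e => f i.succ) t
                  (zz t.succ))).prod))
                = ∑ t : Fin e, yy t.succ *
                    (List.ofFn (Function.update f t.succ (zz t.succ))).prod := by
              apply Finset.sum_congr rfl
              intro t _
              rw [tail_eq t, ← mul_assoc, hcomm 0 t.succ (Fin.succ_pos t), mul_assoc,
                head_eq t]
            rw [zero_eq, Finset.mul_sum, hsums]
        _ = (f 0 * P) * x - cc * ∑ t : Fin (e+1), yy t *
              (List.ofFn (Function.update f t (zz t))).prod := by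
            rw [Fin.sum_univ_succ, mul_add, mul_assoc]
            abel


lemma C1 (hq : ∀ x : R, ↑q * x = x * ↑q) {d : ℕ} (hd : 0 < d)
    (a : Fin d → Fin d → R) (x : R)
    (h1 : ∀ k : Fin d, x * a k ⟨0, hd⟩ = ↑q * (a k ⟨0, hd⟩ * x))
    (h2 : ∀ (k l : Fin d), 0 < (l:ℕ) → x * a k l = a k l * x) :
    x * detq q a = ↑q * (detq q a * x) := by
  obtain ⟨e, rfl⟩ : ∃ e, d = e + 1 := ⟨d - 1, by omega⟩
  have h0 : ((0 : Fin (e+1))) = ⟨0, hd⟩ := rfl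
  rw [detq, Finset.mul_sum, Finset.sum_mul, Finset.mul_sum]
  apply Finset.sum_congr rfl
  intro σ _
  set I := inversions σ with hI
  set κ : R := (((-q)⁻¹ : Rˣ) : R) with hκ
  have key : x * (List.ofFn fun i => a (σ i) i).prod
      = ↑q * ((List.ofFn fun i => a (σ i) i).prod * x) := by
    rw [List.ofFn_succ, List.prod_cons]
    have hcomm : Commute x (List.ofFn fun i : Fin e => a (σ i.succ) i.succ).prod := by
      apply Commute.list_prod_right
      intro w hw
      rw [List.mem_ofFn] at hw
      obtain ⟨i, rfl⟩ := hw
      exact h2 (σ i.succ) i.succ (by simp)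
    calc x * (a (σ 0) 0 * (List.ofFn fun i : Fin e => a (σ i.succ) i.succ).prod)
        = (x * a (σ 0) 0) * (List.ofFn fun i : Fin e => a (σ i.succ) i.succ).prod := by
          rw [mul_assoc]
      _ = (↑q * (a (σ 0) 0 * x)) * (List.ofFn fun i : Fin e => a (σ i.succ) i.succ).prod := by
          rw [show x * a (σ 0) 0 = ↑q * (a (σ 0) 0 * x) from h1 (σ 0)]
      _ = ↑q * (a (σ 0) 0 * (x * (List.ofFn fun i : Fin e => a (σ i.succ) i.succ).prod)) := by
          rw [mul_assoc, mul_assoc]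
      _ = ↑q * (a (σ 0) 0 * ((List.ofFn fun i : Fin e => a (σ i.succ) i.succ).prod * x)) := by
          rw [hcomm.eq]
      _ = ↑q * ((a (σ 0) 0 * (List.ofFn fun i : Fin e => a (σ i.succ) i.succ).prod) * x) := by
          rw [mul_assoc]
  calc x * (κ ^ I * (List.ofFn fun i => a (σ i) i).prod)
      = (x * κ ^ I) * (List.ofFn fun i => a (σ i) i).prod := by rw [mul_assoc]
    _ = (κ ^ I * x) * (List.ofFn fun i => a (σ i) i).prod := by
        rw [← central_kappa q hq I x]
    _ = κ ^ I * (x * (List.ofFn fun i => a (σ i) i).prod) := by rw [mul_assoc]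
    _ = κ ^ I * (↑q * ((List.ofFn fun i => a (σ i) i).prod * x)) := by rw [key]
    _ = (κ ^ I * ↑q) * ((List.ofFn fun i => a (σ i) i).prod * x) := by rw [mul_assoc]
    _ = (↑q * κ ^ I) * ((List.ofFn fun i => a (σ i) i).prod * x) := by
        rw [central_kappa q hq I (↑q)]
    _ = ↑q * (κ ^ I * ((List.ofFn fun i => a (σ i) i).prod * x)) := by rw [mul_assoc]
    _ = ↑q * (κ ^ I * (List.ofFn fun i => a (σ i) i).prod * x) := by rw [mul_assoc]

lemma C2 (hq : ∀ x : R, ↑q * x = x * ↑q) {d : ℕ} (hd : 0 < d)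
    (a : Fin d → Fin d → R) (hA : IsQGeneric q a) (x : R) (y : Fin d → R)
    (h1 : ∀ k : Fin d, a k ⟨0, hd⟩ * x = ↑q * (x * a k ⟨0, hd⟩))
    (h2 : ∀ (k l : Fin d), 0 < (l:ℕ) →
      a k l * x = x * a k l + ((↑q : R) - ↑q⁻¹) * (y l * a k ⟨0, hd⟩))
    (h3 : ∀ (k m l : Fin d), m < l → a k m * y l = y l * a k m) :
    x * detq q a = ↑q⁻¹ * (detq q a * x) := by
  obtain ⟨e, rfl⟩ : ∃ e, d = e + 1 := ⟨d - 1, by omega⟩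
  have hqi := central_qinv q hq
  set cc : R := (↑q : R) - ↑q⁻¹ with hcc
  have hcc_cen : ∀ z : R, cc * z = z * cc := by
    intro z
    rw [hcc, sub_mul, mul_sub, hq z, hqi z]
  set κ : R := (((-q)⁻¹ : Rˣ) : R) with hκ
  -- the column modification function
  have key : ∀ σ : Equiv.Perm (Fin (e+1)),
      x * (List.ofFn fun i => a (σ i) i).prod
        = ↑q⁻¹ * ((List.ofFn fun i => a (σ i) i).prod * x)
          - ↑q⁻¹ * (cc * ∑ t : Fin e, y t.succ *
              (List.ofFn fun i : Fin (e+1) =>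
                a (σ i) (if (i:ℕ) = (t:ℕ) + 1 then ⟨0, hd⟩ else i)).prod) := by
    intro σ
    rw [List.ofFn_succ, List.prod_cons]
    set f : Fin e → R := fun i => a (σ i.succ) i.succ with hf
    set P := (List.ofFn f).prod with hP
    have hx0 : x * a (σ 0) 0 = ↑q⁻¹ * (a (σ 0) 0 * x) := by
      have := h1 (σ 0)
      rw [show (⟨0, hd⟩ : Fin (e+1)) = 0 from rfl] at this
      rw [this, ← mul_assoc, qinv_mul_q, one_mul]
    have hpush := push x cc hcc_cen f (fun i => y i.succ)
      (fun i => a (σ i.succ) ⟨0, hd⟩)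
      (by
        intro t
        have := h2 (σ t.succ) t.succ (by simp)
        rw [hf]
        simp only
        rw [this, add_sub_cancel_right])
      (by
        intro s t hst
        rw [hf]
        simp only
        exact h3 (σ s.succ) s.succ t.succ (by rwa [Fin.succ_lt_succ_iff]))
    have hAV : ∀ t : Fin e,
        a (σ 0) 0 * (List.ofFn (Function.update f t (a (σ t.succ) ⟨0, hd⟩))).prod
          = (List.ofFn fun i : Fin (e+1) =>
              a (σ i) (if (i:ℕ) = (t:ℕ) + 1 then ⟨0, hd⟩ else i)).prod := by
      intro t
      rw [List.ofFn_succ (f := fun i : Fin (e+1) =>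
        a (σ i) (if (i:ℕ) = (t:ℕ) + 1 then ⟨0, hd⟩ else i)), List.prod_cons]
      have hhead : a (σ (0 : Fin (e+1)))
          (if (((0 : Fin (e+1)):ℕ)) = (t:ℕ) + 1 then (⟨0, hd⟩ : Fin (e+1)) else 0)
          = a (σ 0) 0 := by
        rw [if_neg (by simp)]
      have htail : (List.ofFn fun i : Fin e => a (σ i.succ)
          (if ((i.succ : Fin (e+1)):ℕ) = (t:ℕ) + 1 then (⟨0, hd⟩ : Fin (e+1)) else i.succ))
          = List.ofFn (Function.update f t (a (σ t.succ) ⟨0, hd⟩)) := by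
        congr 1
        funext i
        by_cases hit : i = t
        · subst hit
          rw [if_pos (by rw [Fin.val_succ]), Function.update_self]
        · have hne : (i:ℕ) ≠ (t:ℕ) := fun h => hit (Fin.ext h)
          rw [if_neg (by rw [Fin.val_succ]; omega), Function.update_of_ne hit]
      rw [hhead, htail]
    have hpush' : x * P = P * x - cc * ∑ t : Fin e, y t.succ *
        (List.ofFn (Function.update f t (a (σ t.succ) ⟨0, hd⟩))).prod := hpush
    have hsum2 : a (σ 0) 0 * (∑ t : Fin e, y t.succ *
        (List.ofFn (Function.update f t (a (σ t.succ) ⟨0, hd⟩))).prod)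
        = ∑ t : Fin e, y t.succ * (List.ofFn fun i : Fin (e+1) =>
            a (σ i) (if (i:ℕ) = (t:ℕ) + 1 then ⟨0, hd⟩ else i)).prod := by
      rw [Finset.mul_sum]
      apply Finset.sum_congr rfl
      intro t _
      rw [← mul_assoc, h3 (σ 0) 0 t.succ (Fin.succ_pos t), mul_assoc, hAV t]
    calc x * (a (σ 0) 0 * P) = (x * a (σ 0) 0) * P := by rw [mul_assoc]
      _ = ↑q⁻¹ * (a (σ 0) 0 * (x * P)) := by rw [hx0, mul_assoc, mul_assoc]
      _ = ↑q⁻¹ * (a (σ 0) 0 * (P * x))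
          - ↑q⁻¹ * (cc * (a (σ 0) 0 * ∑ t : Fin e, y t.succ *
              (List.ofFn (Function.update f t (a (σ t.succ) ⟨0, hd⟩))).prod)) := by
          rw [hpush', mul_sub, mul_sub, ← mul_assoc (a (σ 0) 0) cc, ← hcc_cen (a (σ 0) 0),
            mul_assoc cc]
      _ = ↑q⁻¹ * ((a (σ 0) 0 * P) * x)
          - ↑q⁻¹ * (cc * ∑ t : Fin e, y t.succ *
              (List.ofFn fun i : Fin (e+1) =>
                a (σ i) (if (i:ℕ) = (t:ℕ) + 1 then ⟨0, hd⟩ else i)).prod) := by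
          rw [← mul_assoc (a (σ 0) 0) P x, hsum2]
  -- assemble
  rw [detq, Finset.mul_sum]
  have hterm : ∀ σ : Equiv.Perm (Fin (e+1)),
      x * (κ ^ (inversions σ) * (List.ofFn fun i => a (σ i) i).prod)
        = ↑q⁻¹ * ((κ ^ (inversions σ) * (List.ofFn fun i => a (σ i) i).prod) * x)
          - ∑ t : Fin e, (↑q⁻¹ * cc) * (y t.succ *
              (κ ^ (inversions σ) * (List.ofFn fun i : Fin (e+1) =>
                a (σ i) (if (i:ℕ) = (t:ℕ) + 1 then ⟨0, hd⟩ else i)).prod)) := by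
    intro σ
    set I := inversions σ with hI
    calc x * (κ ^ I * (List.ofFn fun i => a (σ i) i).prod)
        = κ ^ I * (x * (List.ofFn fun i => a (σ i) i).prod) := by
          rw [← mul_assoc, ← central_kappa q hq I x, mul_assoc]
      _ = κ ^ I * (↑q⁻¹ * ((List.ofFn fun i => a (σ i) i).prod * x))
          - κ ^ I * (↑q⁻¹ * (cc * ∑ t : Fin e, y t.succ *
              (List.ofFn fun i : Fin (e+1) =>
                a (σ i) (if (i:ℕ) = (t:ℕ) + 1 then ⟨0, hd⟩ else i)).prod)) := by
          rw [key σ, mul_sub]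
      _ = ↑q⁻¹ * ((κ ^ I * (List.ofFn fun i => a (σ i) i).prod) * x)
          - κ ^ I * (↑q⁻¹ * (cc * ∑ t : Fin e, y t.succ *
              (List.ofFn fun i : Fin (e+1) =>
                a (σ i) (if (i:ℕ) = (t:ℕ) + 1 then ⟨0, hd⟩ else i)).prod)) := by
          congr 1
          rw [← mul_assoc (κ ^ I) (↑q⁻¹ : R), central_kappa q hq I (↑q⁻¹ : R),
            mul_assoc (↑q⁻¹ : R) (κ ^ I), ← mul_assoc (κ ^ I)]
      _ = ↑q⁻¹ * ((κ ^ I * (List.ofFn fun i => a (σ i) i).prod) * x)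
          - ∑ t : Fin e, (↑q⁻¹ * cc) * (y t.succ *
              (κ ^ I * (List.ofFn fun i : Fin (e+1) =>
                a (σ i) (if (i:ℕ) = (t:ℕ) + 1 then ⟨0, hd⟩ else i)).prod)) := by
          congr 1
          have hS : (κ ^ I) * (∑ t : Fin e, y t.succ *
              (List.ofFn fun i : Fin (e+1) =>
                a (σ i) (if (i:ℕ) = (t:ℕ) + 1 then ⟨0, hd⟩ else i)).prod)
              = ∑ t : Fin e, y t.succ * (κ ^ I *
                  (List.ofFn fun i : Fin (e+1) =>
                    a (σ i) (if (i:ℕ) = (t:ℕ) + 1 then ⟨0, hd⟩ else i)).prod) := by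
            rw [Finset.mul_sum]
            apply Finset.sum_congr rfl
            intro t _
            rw [← mul_assoc, central_kappa q hq I (y t.succ), mul_assoc]
          rw [← mul_assoc (κ ^ I) (↑q⁻¹ : R), central_kappa q hq I (↑q⁻¹ : R),
            mul_assoc (↑q⁻¹ : R) (κ ^ I), ← mul_assoc (κ ^ I) cc,
            central_kappa q hq I cc, mul_assoc cc (κ ^ I), hS,
            ← mul_assoc (↑q⁻¹ : R) cc, Finset.mul_sum]
  rw [Finset.sum_congr rfl (fun σ _ => hterm σ), Finset.sum_sub_distrib]
  have hzero : (∑ σ : Equiv.Perm (Fin (e+1)), ∑ t : Fin e, (↑q⁻¹ * cc) * (y t.succ *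
      (κ ^ (inversions σ) * (List.ofFn fun i : Fin (e+1) =>
        a (σ i) (if (i:ℕ) = (t:ℕ) + 1 then ⟨0, hd⟩ else i)).prod))) = 0 := by
    rw [Finset.sum_comm]
    apply Finset.sum_eq_zero
    intro t _
    have hD : Dsum R q a (fun i : Fin (e+1) =>
        if (i:ℕ) = (t:ℕ) + 1 then ⟨0, hd⟩ else i) = 0 :=
      Dsum_dup_zero q hq hd a hA (t:ℕ) (by omega)
    rw [Dsum] at hD
    calc (∑ σ : Equiv.Perm (Fin (e+1)), (↑q⁻¹ * cc) * (y t.succ *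
        (κ ^ (inversions σ) * (List.ofFn fun i : Fin (e+1) =>
          a (σ i) (if (i:ℕ) = (t:ℕ) + 1 then ⟨0, hd⟩ else i)).prod)))
        = (↑q⁻¹ * cc) * (y t.succ * ∑ σ : Equiv.Perm (Fin (e+1)),
            (κ ^ (inversions σ) * (List.ofFn fun i : Fin (e+1) =>
              a (σ i) (if (i:ℕ) = (t:ℕ) + 1 then ⟨0, hd⟩ else i)).prod)) := by
          rw [Finset.mul_sum, Finset.mul_sum]
      _ = 0 := by rw [hD, mul_zero, mul_zero]
  rw [hzero, sub_zero, ← Finset.mul_sum, ← Finset.sum_mul]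

end Aux

/-- Base case of `q`-commuting minors: if `{j}` surrounds `I` (all of `I` below `j`,
resp. all of `I` above `j`), then the entry `x_{j,1}` and the quantum minor
`[I] = det_q X_{I,[|I|]}` satisfy `x_{j,1}[I] = q^{±1} [I] x_{j,1}`. -/
theorem stmt_6 {R : Type*} [Ring R] (q : Rˣ) (hq : ∀ x : R, ↑q * x = x * ↑q)
    {n d : ℕ} (X : Fin n → Fin n → R) (hX : IsQGeneric q X)
    (hd : 0 < d) (hdn : d ≤ n)
    (r : Fin d → Fin n) (hr : StrictMono r)
    (j : Fin n) (hj : ∀ i, j ≠ r i) :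
    ((∀ i, r i < j) →
      X j (Fin.castLE hdn ⟨0, hd⟩) * detq q (fun k l => X (r k) (Fin.castLE hdn l))
        = ↑q * (detq q (fun k l => X (r k) (Fin.castLE hdn l)) *
            X j (Fin.castLE hdn ⟨0, hd⟩))) ∧
    ((∀ i, j < r i) →
      X j (Fin.castLE hdn ⟨0, hd⟩) * detq q (fun k l => X (r k) (Fin.castLE hdn l))
        = ↑q⁻¹ * (detq q (fun k l => X (r k) (Fin.castLE hdn l)) *
            X j (Fin.castLE hdn ⟨0, hd⟩))) := by
  have hA : IsQGeneric q (fun k l : Fin d => X (r k) (Fin.castLE hdn l)) := by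
    obtain ⟨r1, r2, r3, r4⟩ := hX
    exact ⟨fun i k l hkl => r1 (r i) _ _ (by simpa using hkl),
           fun i j' k hij => r2 (r i) (r j') _ (hr hij),
           fun i j' k l hij hkl => r3 (r i) (r j') _ _ (hr hij) (by simpa using hkl),
           fun i j' k l hij hkl => r4 (r i) (r j') _ _ (hr hij) (by simpa using hkl)⟩
  constructor
  · intro hlt
    exact C1 q hq hd (fun k l => X (r k) (Fin.castLE hdn l)) (X j (Fin.castLE hdn ⟨0, hd⟩))
      (fun k => hX.2.1 (r k) j (Fin.castLE hdn ⟨0, hd⟩) (hlt k))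
      (fun k l hl => hX.2.2.1 (r k) j (Fin.castLE hdn ⟨0, hd⟩) (Fin.castLE hdn l) (hlt k)
        (by rw [Fin.lt_def]; simpa using hl))
  · intro hgt
    exact C2 q hq hd (fun k l => X (r k) (Fin.castLE hdn l)) hA
      (X j (Fin.castLE hdn ⟨0, hd⟩)) (fun l => X j (Fin.castLE hdn l))
      (fun k => hX.2.1 j (r k) (Fin.castLE hdn ⟨0, hd⟩) (hgt k))
      (fun k l hl => hX.2.2.2 j (r k) (Fin.castLE hdn ⟨0, hd⟩) (Fin.castLE hdn l) (hgt k)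
        (by rw [Fin.lt_def]; simpa using hl))
      (fun k m l hml => hX.2.2.1 j (r k) (Fin.castLE hdn m) (Fin.castLE hdn l) (hgt k)
        (by simpa using hml))
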